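/- For π ∈ S_n, let π^r denote the reverse of π, i.e., π^r(i) = π(n+1−i). Then for any k ∈ {1,...,n}, the singleton {k} is a dominating set of the permutation graph G_π if and only if k is a strong fixed point of π^r. Consequently, the number of permutations of {1,...,n} with exactly t strong fixed points equals the number of permutations whose permutation graph has exactly t singleton dominating sets. -/

import Mathlib

/-- The permutation graph of `π`: vertices `0,…,n-1` (0-indexed version of `1,…,n`),
with `i < j` adjacent iff `π⁻¹ i > π⁻¹ j`. -/
def permGraph {n : ℕ} (π : Equiv.Perm (Fin n)) : SimpleGraph (Fin n) where
  Adj i j := (i < j ∧ π.symm j < π.symm i) ∨ (j < i ∧ π.symm i < π.symm j)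
  symm := ⟨fun i j h => by tauto⟩
  loopless := ⟨fun i h => by rcases h with ⟨h, _⟩ | ⟨h, _⟩ <;> exact lt_irrefl i h⟩

/-- `D` dominates `G`: every vertex is in `D` or adjacent to an element of `D`. -/
def Dominates {V : Type*} (G : SimpleGraph V) (D : Set V) : Prop :=
  ∀ v, v ∈ D ∨ ∃ d ∈ D, G.Adj v d

/-- The domination number: minimum cardinality of a dominating set. -/
noncomputable def domNumber {V : Type*} [Fintype V] (G : SimpleGraph V) : ℕ :=
  sInf {k | ∃ D : Finset V, D.card = k ∧ Dominates G ↑D}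

/-- Closed neighborhood `N[x]`. -/
def closedNbhd {V : Type*} (G : SimpleGraph V) (x : V) : Set V :=
  {y | y = x ∨ G.Adj x y}

/-- Degree of a vertex. -/
noncomputable def deg {V : Type*} (G : SimpleGraph V) (v : V) : ℕ :=
  (G.neighborSet v).ncard

/-- `k` is a strong fixed point of `π`. -/
def StrongFixedPoint {n : ℕ} (π : Equiv.Perm (Fin n)) (k : Fin n) : Prop :=
  (∀ j, j < k → π.symm j < π.symm k) ∧ (∀ i, k < i → π.symm k < π.symm i)


private lemma key_dom_sfp {n : ℕ} (π : Equiv.Perm (Fin n)) (k : Fin n) :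
    Dominates (permGraph π) {k} ↔ StrongFixedPoint (Fin.revPerm.trans π) k := by
  simp only [Dominates, StrongFixedPoint, Set.mem_singleton_iff, permGraph,
    Equiv.symm_trans_apply, Fin.revPerm_symm, Fin.revPerm_apply, Fin.rev_lt_rev]
  constructor
  · intro h
    constructor
    · intro j hj
      rcases h j with rfl | ⟨d, rfl, hadj⟩
      · exact absurd hj (lt_irrefl _)
      · rcases hadj with ⟨_, h2⟩ | ⟨h1, _⟩
        · exact h2
        · exact absurd (hj.trans h1) (lt_irrefl _)
    · intro i hi
      rcases h i with rfl | ⟨d, rfl, hadj⟩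
      · exact absurd hi (lt_irrefl _)
      · rcases hadj with ⟨h1, _⟩ | ⟨_, h2⟩
        · exact absurd (hi.trans h1) (lt_irrefl _)
        · exact h2
  · rintro ⟨h1, h2⟩ v
    rcases lt_trichotomy v k with hv | rfl | hv
    · exact Or.inr ⟨k, rfl, Or.inl ⟨hv, h1 v hv⟩⟩
    · exact Or.inl rfl
    · exact Or.inr ⟨k, rfl, Or.inr ⟨hv, h2 v hv⟩⟩

theorem dominating_singleton_iff_strong_fixed_point_of_reverse {n : ℕ} :
    (∀ (π : Equiv.Perm (Fin n)) (k : Fin n),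
      Dominates (permGraph π) {k} ↔ StrongFixedPoint (Fin.revPerm.trans π) k) ∧
    ∀ t : ℕ,
      Nat.card {π : Equiv.Perm (Fin n) // {k | StrongFixedPoint π k}.ncard = t} =
      Nat.card {π : Equiv.Perm (Fin n) // {k | Dominates (permGraph π) {k}}.ncard = t} := by

  refine ⟨key_dom_sfp, fun t => ?_⟩
  refine Nat.card_congr (Equiv.subtypeEquiv (Equiv.mulRight Fin.revPerm) fun π => ?_)
  have h1 : (Equiv.mulRight Fin.revPerm π : Equiv.Perm (Fin n)) = Fin.revPerm.trans π := rfl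
  have h2 : Fin.revPerm.trans (Fin.revPerm.trans π) = π := by
    ext x; simp [Fin.rev_rev]
  have : {k | Dominates (permGraph (Equiv.mulRight Fin.revPerm π)) {k}} =
      {k | StrongFixedPoint π k} := by
    ext k
    rw [Set.mem_setOf_eq, Set.mem_setOf_eq, key_dom_sfp, h1, h2]
  rw [this]
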